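/- arXiv:1206.6750 — 5 statements merged into one kernel-verified Lean document; each statement's English description precedes it below -/
import Mathlib

section
/- Let e, f, g be formal power series in variables s, q (and possibly other variables) over a commutative ring, and suppose F satisfies the functional equation F(s) = x·e(s) + x·f(s)·F(1) + x·g(s)·F(qs), where F(1) means setting s=1 and F(qs) means replacing s by qs. Define E(s) = Σ_{n≥0} x^{n+1} g(s)g(sq)⋯g(sq^{n-1}) e(sq^n) and G(s) = Σ_{n≥0} x^{n+1} g(s)g(sq)⋯g(sq^{n-1}) f(sq^n). Then F(s) = (E(s) + E(1)G(s) − E(s)G(1)) / (1 − G(1)). -/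
noncomputable section

variable (R : Type*) [CommRing R]

/-- The coefficient ring `R[[q]][s]`: polynomials in `s` over formal power series
in `q`.  Power series in `x` over this ring model series in `x, q, s` for which
substitutions `s ↦ 1` and `s ↦ q^i s` make sense. -/
abbrev QS := Polynomial (PowerSeries R)

/-- Substitution `s ↦ v` on the coefficient ring. -/
def subS (v : QS R) : QS R →+* QS R := (Polynomial.aeval v).toRingHom

/-- Substitution `s ↦ q^i s`. -/
def sigma (i : ℕ) : QS R →+* QS R :=
  subS R (Polynomial.C (PowerSeries.X ^ i) * Polynomial.X)

/-- Given `g` and `e`, the series `Σ_{n≥0} x^{n+1} g(s)g(sq)⋯g(sq^{n-1}) e(sq^n)`. -/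
def Eser (g e : QS R) : PowerSeries (QS R) :=
  PowerSeries.mk fun m =>
    match m with
    | 0 => 0
    | n + 1 => (∏ i ∈ Finset.range n, sigma R i g) * sigma R n e

lemma subS_C (v : QS R) (c : PowerSeries R) : subS R v (Polynomial.C c) = Polynomial.C c :=
  Polynomial.aeval_C _ _

lemma sigma_zero (a : QS R) : sigma R 0 a = a := by
  simp [sigma, subS]

lemma sigma_sigma (i : ℕ) (a : QS R) : sigma R 1 (sigma R i a) = sigma R (i + 1) a := by
  have h := Polynomial.aeval_algHom_apply
      (Polynomial.aeval (R := PowerSeries R)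
        (Polynomial.C ((PowerSeries.X : PowerSeries R) ^ 1) * Polynomial.X))
      (Polynomial.C ((PowerSeries.X : PowerSeries R) ^ i) * Polynomial.X) a
  have h2 : (Polynomial.aeval (R := PowerSeries R)
        (Polynomial.C ((PowerSeries.X : PowerSeries R) ^ 1) * Polynomial.X))
        (Polynomial.C ((PowerSeries.X : PowerSeries R) ^ i) * Polynomial.X)
      = Polynomial.C ((PowerSeries.X : PowerSeries R) ^ (i + 1)) * Polynomial.X := by
    simp [Polynomial.aeval_C]
    ring
  show (Polynomial.aeval (R := PowerSeries R)
      (Polynomial.C ((PowerSeries.X : PowerSeries R) ^ 1) * Polynomial.X))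
      ((Polynomial.aeval (R := PowerSeries R)
        (Polynomial.C ((PowerSeries.X : PowerSeries R) ^ i) * Polynomial.X)) a)
    = (Polynomial.aeval (R := PowerSeries R)
      (Polynomial.C ((PowerSeries.X : PowerSeries R) ^ (i + 1)) * Polynomial.X)) a
  rw [← h2]
  exact h.symm

lemma sigma_C (i : ℕ) (c : PowerSeries R) : sigma R i (Polynomial.C c) = Polynomial.C c :=
  Polynomial.aeval_C _ _

lemma pmap_pmap (f g : QS R →+* QS R) (h : QS R →+* QS R) (hc : f.comp g = h)
    (φ : PowerSeries (QS R)) :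
    PowerSeries.map f (PowerSeries.map g φ) = PowerSeries.map h φ := by
  rw [← hc, PowerSeries.map_comp, RingHom.comp_apply]

lemma sigma_comp_subS_one : (sigma R 1).comp (subS R 1) = subS R 1 := by
  apply Polynomial.ringHom_ext
  · intro a
    simp [subS_C, sigma_C, RingHom.comp_apply]
  · simp [subS, sigma_C, RingHom.comp_apply, map_one]

lemma subS_comp_subS_one : (subS R 1).comp (subS R 1) = subS R 1 := by
  apply Polynomial.ringHom_ext
  · intro a
    simp [subS_C, RingHom.comp_apply]
  · simp [subS, RingHom.comp_apply, map_one]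

lemma Eser_eq (g e : QS R) :
    Eser R g e = PowerSeries.X * PowerSeries.C e
      + PowerSeries.X * PowerSeries.C g
        * PowerSeries.map (sigma R 1) (Eser R g e) := by
  refine PowerSeries.ext fun n => ?_
  match n with
  | 0 => simp [Eser]
  | 1 =>
    rw [map_add, mul_assoc, PowerSeries.coeff_succ_X_mul, PowerSeries.coeff_succ_X_mul,
      PowerSeries.coeff_C_mul, PowerSeries.coeff_map]
    simp [Eser, sigma_zero]
  | (n + 2) =>
    rw [map_add, mul_assoc, PowerSeries.coeff_succ_X_mul, PowerSeries.coeff_succ_X_mul,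
      PowerSeries.coeff_C_mul, PowerSeries.coeff_map]
    simp only [Eser, PowerSeries.coeff_mk, map_mul, map_prod, sigma_sigma,
      Finset.prod_range_succ', sigma_zero, PowerSeries.coeff_C, Nat.succ_ne_zero, if_false]
    ring

lemma X_mul_fix_eq_zero (g : QS R) (D : PowerSeries (QS R))
    (hD : D = PowerSeries.X * PowerSeries.C g * PowerSeries.map (sigma R 1) D) :
    D = 0 := by
  refine PowerSeries.ext fun n => ?_
  induction n using Nat.strong_induction_on with
  | _ n ih =>
    match n with
    | 0 =>
      rw [hD]
      simp [mul_assoc, PowerSeries.coeff_zero_eq_constantCoeff]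
    | (n + 1) =>
      rw [hD, mul_assoc, PowerSeries.coeff_succ_X_mul, PowerSeries.coeff_C_mul,
        PowerSeries.coeff_map, ih n (Nat.lt_succ_self n)]
      simp

/-- Bousquet-Mélou's lemma: if `F(s) = x·e(s) + x·f(s)·F(1) + x·g(s)·F(qs)`, then
`F(s) = (E(s) + E(1)G(s) − E(s)G(1)) / (1 − G(1))`, where
`E(s) = Σ_{n≥0} x^{n+1} g(s)⋯g(sq^{n-1}) e(sq^n)` and
`G(s) = Σ_{n≥0} x^{n+1} g(s)⋯g(sq^{n-1}) f(sq^n)`. -/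
theorem bousquet_melou_lemma (e f g : QS R) (F : PowerSeries (QS R))
    (hF : F = PowerSeries.X * PowerSeries.C e
        + PowerSeries.X * PowerSeries.C f * PowerSeries.map (subS R 1) F
        + PowerSeries.X * PowerSeries.C g * PowerSeries.map (sigma R 1) F) :
    F = (Eser R g e
          + PowerSeries.map (subS R 1) (Eser R g e) * Eser R g f
          - Eser R g e * PowerSeries.map (subS R 1) (Eser R g f))
        * PowerSeries.invOfUnit (1 - PowerSeries.map (subS R 1) (Eser R g f)) 1 := by
  set E1 := PowerSeries.map (subS R 1) (Eser R g e) with hE1def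
  set G1 := PowerSeries.map (subS R 1) (Eser R g f) with hG1def
  set E := Eser R g e with hEdef
  set G := Eser R g f with hGdef
  set F1 := PowerSeries.map (subS R 1) F with hF1def
  have hE : E = PowerSeries.X * PowerSeries.C e
      + PowerSeries.X * PowerSeries.C g * PowerSeries.map (sigma R 1) E :=
    Eser_eq R g e
  have hG : G = PowerSeries.X * PowerSeries.C f
      + PowerSeries.X * PowerSeries.C g * PowerSeries.map (sigma R 1) G :=
    Eser_eq R g f
  -- Step 1: F = E + G * F1
  have hD : F - (E + G * F1) = PowerSeries.X * PowerSeries.C g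
      * PowerSeries.map (sigma R 1) (F - (E + G * F1)) := by
    rw [map_sub, map_add, map_mul, hF1def,
      pmap_pmap R _ _ _ (sigma_comp_subS_one R), ← hF1def]
    linear_combination hF - hE - F1 * hG
  have key : F = E + G * F1 := eq_of_sub_eq_zero (X_mul_fix_eq_zero R g _ hD)
  -- Step 2: F1 = E1 + G1 * F1
  have key1 : F1 = E1 + G1 * F1 := by
    rw [hF1def]
    conv_lhs => rw [key]
    rw [map_add, map_mul, hF1def, pmap_pmap R _ _ _ (subS_comp_subS_one R), ← hF1def,
      ← hE1def, ← hG1def]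
  have h2 : (1 - G1) * F1 = E1 := by linear_combination key1
  -- invertibility
  have hc : PowerSeries.constantCoeff (1 - G1) = ((1 : (QS R)ˣ) : QS R) := by
    rw [map_sub, map_one, hG1def]
    have : PowerSeries.constantCoeff (PowerSeries.map (subS R 1) (Eser R g f))
        = subS R 1 (PowerSeries.constantCoeff (Eser R g f)) := rfl
    rw [this]
    simp [Eser]
  have hinv : (1 - G1) * PowerSeries.invOfUnit (1 - G1) 1 = 1 :=
    PowerSeries.mul_invOfUnit _ _ hc
  rw [key]
  linear_combination (G * PowerSeries.invOfUnit (1 - G1) 1) * h2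
    - (E + G * F1) * hinv

end
end

section
/- (One-variable case of Theorem 1, uniqueness and existence.) Let J ⊆ {-1, 0, 1, 2, …} be a finite set, let e(r) and f_j(r) for j ∈ J be formal power series in x, q, r over a commutative ring. Then there exists a unique formal power series F(r) in x, q, r satisfying F(r) = e(r) + Σ_{j∈J} x·f_j(r)·F(σ_j(r)), where σ_j(r) = 1 if j = −1 and σ_j(r) = q^j r if j ≥ 0. -/
noncomputable section

variable (R : Type*) [CommRing R]

/-- The coefficient ring `R[[q]][r]`: polynomials in `r` over formal power
series in `q`. -/
abbrev QR := Polynomial (PowerSeries R)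

/-- The substitution `σ_j`: `r ↦ 1` if `j = -1`, and `r ↦ q^j r` if `j ≥ 0`. -/
def tau (j : ℤ) : QR R →+* QR R :=
  if j = -1 then (Polynomial.aeval (1 : QR R)).toRingHom
  else (Polynomial.aeval ((Polynomial.C (PowerSeries.X ^ j.toNat) : QR R) * Polynomial.X)).toRingHom

/-- One-variable case of the main theorem: existence and uniqueness.  For a
finite set `J ⊆ {-1,0,1,2,…}` and power series `e`, `f_j`, there is a unique
formal power series `F` with `F(r) = e(r) + Σ_{j∈J} x·f_j(r)·F(σ_j(r))`. -/
theorem exists_unique_solution (J : Finset ℤ) (hJ : ∀ j ∈ J, -1 ≤ j)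
    (e : QR R) (f : ℤ → QR R) :
    ∃! F : PowerSeries (QR R),
      F = PowerSeries.C e
        + ∑ j ∈ J, PowerSeries.X * PowerSeries.C (f j)
            * PowerSeries.map (tau R j) F := by
  classical
  set Φ : PowerSeries (QR R) → PowerSeries (QR R) := fun F =>
    PowerSeries.C e
      + ∑ j ∈ J, PowerSeries.X * PowerSeries.C (f j)
          * PowerSeries.map (tau R j) F with hΦ
  have key0 : ∀ F, PowerSeries.coeff 0 (Φ F) = e := by
    intro F
    simp [hΦ]
  have key : ∀ (F : PowerSeries (QR R)) (n : ℕ),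
      PowerSeries.coeff (n + 1) (Φ F)
        = ∑ j ∈ J, f j * tau R j (PowerSeries.coeff n F) := by
    intro F n
    simp only [hΦ, map_add, map_sum, mul_assoc, PowerSeries.coeff_succ_X_mul,
      PowerSeries.coeff_C_mul, PowerSeries.coeff_map, PowerSeries.coeff_C,
      Nat.succ_ne_zero, if_false, zero_add]
  -- recursively defined coefficients
  set g : ℕ → QR R := fun n =>
    Nat.rec e (fun _ a => ∑ j ∈ J, f j * tau R j a) n with hg
  refine ⟨PowerSeries.mk g, ?_, ?_⟩
  · refine PowerSeries.ext fun n => ?_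
    cases n with
    | zero => rw [key0]; simp [hg]
    | succ n =>
      rw [key]
      simp only [PowerSeries.coeff_mk]; rfl
  · intro G hG
    refine PowerSeries.ext fun n => ?_
    induction n with
    | zero =>
      rw [show (PowerSeries.coeff 0) G = PowerSeries.coeff 0 (Φ G) from
        congrArg _ hG, key0]
      simp [hg]
    | succ n ih =>
      rw [show (PowerSeries.coeff (n+1)) G = PowerSeries.coeff (n+1) (Φ G) from
        congrArg _ hG, key, ih]
      simp only [PowerSeries.coeff_mk]; rfl

end
end

section
/- The number of parallelogram polyominoes with perimeter 2n equals the Catalan number C_{n−1}. -/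
/-- A parallelogram (staircase) polyomino, described column by column: it has
`w ≥ 1` columns, the `i`-th column occupying cells in rows `b i` to `t i`
(inclusive).  The bottom and top profiles are weakly increasing (staircase
condition), successive columns share an edge, and the polyomino touches the
bottom-left corner of its bounding rectangle (`b 0 = 0`; by monotonicity it
then automatically touches the top-right corner). -/
structure ParallelogramPolyomino where
  w : ℕ
  hw : 0 < w
  b : Fin w → ℕ
  t : Fin w → ℕ
  hbt : ∀ i, b i ≤ t i
  hbmono : Monotone b
  htmono : Monotone t
  hconn : ∀ i j : Fin w, (j : ℕ) = (i : ℕ) + 1 → b j ≤ t i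
  hb0 : b ⟨0, hw⟩ = 0

/-- The height of the bounding rectangle: one more than the top row of the
last column. -/
def ParallelogramPolyomino.height (P : ParallelogramPolyomino) : ℕ :=
  P.t ⟨P.w - 1, Nat.sub_lt P.hw Nat.one_pos⟩ + 1

/-- The perimeter of (the bounding rectangle of) a parallelogram polyomino:
twice the sum of the width and the height. -/
def ParallelogramPolyomino.perimeter (P : ParallelogramPolyomino) : ℕ :=
  2 * (P.w + P.height)


/-- Staircase sequences: monotone, `a k ≤ k`. -/
def CatSeq (m : ℕ) : Type :=
  {a : Fin m → ℕ // Monotone a ∧ ∀ k : Fin m, a k ≤ (k : ℕ)}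

noncomputable instance (m : ℕ) : Fintype (CatSeq m) :=
  Fintype.ofInjective
    (fun a => (fun k => (⟨a.1 k, lt_of_le_of_lt (a.2.2 k) k.isLt⟩ : Fin m)))
    (fun a a' h => Subtype.ext (funext fun k => congrArg Fin.val (congrFun h k)))

instance : Unique (CatSeq 0) where
  default := ⟨fun k => k.elim0, fun k => k.elim0, fun k => k.elim0⟩
  uniq a := Subtype.ext (funext fun k => k.elim0)

/-- The largest index `j` with `a j = j`. -/
def lastFix {m : ℕ} (a : CatSeq (m + 1)) : ℕ :=
  Nat.findGreatest (fun k => ∀ h : k < m + 1, a.1 ⟨k, h⟩ = k) m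

lemma lastFix_le {m : ℕ} (a : CatSeq (m + 1)) : lastFix a ≤ m :=
  Nat.findGreatest_le m

lemma lastFix_spec {m : ℕ} (a : CatSeq (m + 1)) :
    a.1 ⟨lastFix a, Nat.lt_succ_of_le (lastFix_le a)⟩ = lastFix a := by
  have h0 : ∀ h : 0 < m + 1, a.1 ⟨0, h⟩ = 0 := fun h =>
    Nat.le_zero.mp (a.2.2 ⟨0, h⟩)
  exact Nat.findGreatest_spec (P := fun k => ∀ h : k < m + 1, a.1 ⟨k, h⟩ = k)
    (Nat.zero_le m) h0 (Nat.lt_succ_of_le (lastFix_le a))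

lemma lastFix_gt {m : ℕ} (a : CatSeq (m + 1)) {k : ℕ} (h : k < m + 1) (hk : lastFix a < k)
    (hk2 : k ≤ m) : a.1 ⟨k, h⟩ ≤ k - 1 := by
  have := Nat.findGreatest_is_greatest (P := fun k => ∀ h : k < m + 1, a.1 ⟨k, h⟩ = k) hk hk2
  have hne : a.1 ⟨k, h⟩ ≠ k := fun he => this (fun h' => he)
  have hle := a.2.2 ⟨k, h⟩
  have hd : ((⟨k, h⟩ : Fin (m + 1)) : ℕ) = k := rfl
  omega

section Glue
variable {m j : ℕ}

/-- Glue `x`, the value `j`, and `y + j` into one sequence. -/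
def glue (x : CatSeq j) (y : CatSeq (m - j)) : Fin (m + 1) → ℕ := fun k =>
  if h1 : (k : ℕ) < j then x.1 ⟨k, h1⟩
  else if h2 : (k : ℕ) = j then j
  else y.1 ⟨(k : ℕ) - (j + 1), by omega⟩ + j

lemma glue_lt (x : CatSeq j) (y : CatSeq (m - j)) (k : Fin (m + 1)) (h : (k : ℕ) < j) :
    glue x y k = x.1 ⟨k, h⟩ := by simp [glue, dif_pos h]

lemma glue_eq (x : CatSeq j) (y : CatSeq (m - j)) (k : Fin (m + 1)) (h : (k : ℕ) = j) :
    glue x y k = j := by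
  have : ¬ (k : ℕ) < j := by omega
  simp [glue, dif_neg this, h]

lemma glue_gt (x : CatSeq j) (y : CatSeq (m - j)) (k : Fin (m + 1)) (h : j < (k : ℕ)) :
    glue x y k = y.1 ⟨(k : ℕ) - (j + 1), by omega⟩ + j := by
  have h1 : ¬ (k : ℕ) < j := by omega
  have h2 : ¬ (k : ℕ) = j := by omega
  simp [glue, dif_neg h1, dif_neg h2]

lemma glue_le (x : CatSeq j) (y : CatSeq (m - j)) (k : Fin (m + 1)) :
    glue x y k ≤ (k : ℕ) := by
  rcases lt_trichotomy (k : ℕ) j with h | h | h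
  · rw [glue_lt x y k h]; exact x.2.2 _
  · rw [glue_eq x y k h]; omega
  · rw [glue_gt x y k h]
    have := y.2.2 ⟨(k : ℕ) - (j + 1), by omega⟩
    simp only [Fin.val_mk] at this
    omega

lemma glue_mono (x : CatSeq j) (y : CatSeq (m - j)) : Monotone (glue x y) := by
  intro u v huv
  have huv' : (u : ℕ) ≤ (v : ℕ) := huv
  rcases lt_trichotomy (u : ℕ) j with hu | hu | hu
  · rw [glue_lt x y u hu]
    rcases lt_trichotomy (v : ℕ) j with hv | hv | hv
    · rw [glue_lt x y v hv]
      exact x.2.1 (show (⟨(u:ℕ), hu⟩ : Fin j) ≤ ⟨(v:ℕ), hv⟩ from huv')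
    · rw [glue_eq x y v hv]
      have := x.2.2 ⟨(u:ℕ), hu⟩; simp only [Fin.val_mk] at this; omega
    · rw [glue_gt x y v hv]
      have := x.2.2 ⟨(u:ℕ), hu⟩; simp only [Fin.val_mk] at this; omega
  · rw [glue_eq x y u hu]
    rcases lt_trichotomy (v : ℕ) j with hv | hv | hv
    · omega
    · rw [glue_eq x y v hv]
    · rw [glue_gt x y v hv]; omega
  · rw [glue_gt x y u hu]
    have hv : j < (v : ℕ) := by omega
    rw [glue_gt x y v hv]
    have := y.2.1 (show (⟨(u:ℕ) - (j+1), by omega⟩ : Fin (m - j)) ≤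
      ⟨(v:ℕ) - (j+1), by omega⟩ from by simp [Fin.le_def]; omega)
    omega

/-- The glued sequence as a `CatSeq`. -/
def glueCS (x : CatSeq j) (y : CatSeq (m - j)) : CatSeq (m + 1) :=
  ⟨glue x y, glue_mono x y, glue_le x y⟩

lemma lastFix_glue (hj : j ≤ m) (x : CatSeq j) (y : CatSeq (m - j)) :
    lastFix (glueCS x y) = j := by
  apply le_antisymm
  · by_contra hgt
    push_neg at hgt
    have hle : lastFix (glueCS x y) ≤ m := lastFix_le _
    have hs := lastFix_spec (glueCS x y)
    rw [show (glueCS x y).1 = glue x y from rfl] at hs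
    rw [glue_gt x y _ (by simpa using hgt)] at hs
    simp only [Fin.val_mk] at hs
    have := y.2.2 ⟨lastFix (glueCS x y) - (j + 1), by omega⟩
    simp only [Fin.val_mk] at this
    omega
  · apply Nat.le_findGreatest hj
    intro h
    exact glue_eq x y ⟨j, h⟩ rfl

end Glue

set_option maxHeartbeats 2000000 in
def fiberEquiv (m j : ℕ) (hj : j ≤ m) :
    {a : CatSeq (m + 1) // lastFix a = j} ≃ CatSeq j × CatSeq (m - j) where
  toFun a :=
    (⟨fun i => a.1.1 ⟨i, by omega⟩,
      fun u v huv => a.1.2.1 (show (⟨u, by omega⟩ : Fin (m+1)) ≤ ⟨v, by omega⟩ from huv),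
      fun i => a.1.2.2 ⟨i, by omega⟩⟩,
     ⟨fun i => a.1.1 ⟨j + 1 + i, by omega⟩ - j,
      fun u v huv => Nat.sub_le_sub_right
        (a.1.2.1 (show (⟨j+1+u, by omega⟩ : Fin (m+1)) ≤ ⟨j+1+v, by omega⟩ from by
          simp only [Fin.mk_le_mk]; omega)) j,
      fun i => by
        have := lastFix_gt a.1 (k := j + 1 + (i : ℕ)) (by omega) (by omega) (by omega)
        simp only [Fin.val_mk] at this ⊢
        omega⟩)
  invFun x := ⟨glueCS (m := m) x.1 x.2, lastFix_glue hj x.1 x.2⟩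
  left_inv := by
    rintro ⟨a, ha⟩
    apply Subtype.ext
    apply Subtype.ext
    funext k
    subst ha
    show glue _ _ k = a.1 k
    rcases lt_trichotomy (k : ℕ) (lastFix a) with hk | hk | hk
    · rw [glue_lt _ _ k hk]
    · rw [glue_eq _ _ k hk]
      have hkk : k = ⟨lastFix a, Nat.lt_succ_of_le (lastFix_le a)⟩ := Fin.ext hk
      rw [hkk]
      exact (lastFix_spec a).symm
    · rw [glue_gt _ _ k hk]
      have hfix := lastFix_spec a
      have hmono := a.2.1
        (show (⟨lastFix a, Nat.lt_succ_of_le (lastFix_le a)⟩ : Fin (m+1)) ≤ k from by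
          simp only [Fin.le_def, Fin.val_mk]; omega)
      have key : ∀ u : Fin (m + 1), (u : ℕ) = (k : ℕ) →
          a.1 u - lastFix a + lastFix a = a.1 k := by
        intro u hu
        have : u = k := Fin.ext hu
        subst this
        omega
      exact key _ (by simp only [Fin.val_mk]; omega)
  right_inv := by
    rintro ⟨x, y⟩
    apply Prod.ext
    · apply Subtype.ext
      funext i
      show glue x y ⟨(i : ℕ), by omega⟩ = x.1 i
      rw [glue_lt x y _ (by simpa using i.isLt)]
    · apply Subtype.ext
      funext i
      show glue x y ⟨j + 1 + (i : ℕ), by omega⟩ - j = y.1 i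
      rw [glue_gt x y _ (by simp only [Fin.val_mk]; omega)]
      have key : ∀ u : Fin (m - j), (u : ℕ) = (i : ℕ) → y.1 u + j - j = y.1 i := by
        intro u hu
        have : u = i := Fin.ext hu
        subst this
        omega
      exact key _ (by simp only [Fin.val_mk]; omega)

theorem catSeq_card (m : ℕ) : Nat.card (CatSeq m) = catalan m := by
  induction m using Nat.strong_induction_on with
  | _ m ih =>
    match m with
    | 0 => simp [Nat.card_unique, catalan_zero]
    | m + 1 =>
      have e1 : CatSeq (m + 1) ≃
          Σ j : Fin (m + 1), {a : CatSeq (m + 1) //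
            (⟨lastFix a, Nat.lt_succ_of_le (lastFix_le a)⟩ : Fin (m + 1)) = j} :=
        (Equiv.sigmaFiberEquiv _).symm
      have e2 : ∀ j : Fin (m + 1),
          {a : CatSeq (m + 1) //
            (⟨lastFix a, Nat.lt_succ_of_le (lastFix_le a)⟩ : Fin (m + 1)) = j} ≃
          CatSeq (j : ℕ) × CatSeq (m - (j : ℕ)) := fun j =>
        (Equiv.subtypeEquivRight (fun a => by
          constructor
          · intro h; exact congrArg Fin.val h
          · intro h; exact Fin.ext h)).trans
          (fiberEquiv m j (by omega))
      rw [Nat.card_congr e1]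
      rw [Nat.card_eq_fintype_card]
      classical
      rw [Fintype.card_sigma]
      have : ∀ j : Fin (m + 1),
          Fintype.card {a : CatSeq (m + 1) //
            (⟨lastFix a, Nat.lt_succ_of_le (lastFix_le a)⟩ : Fin (m + 1)) = j}
          = catalan (j : ℕ) * catalan (m - (j : ℕ)) := by
        intro j
        rw [← Nat.card_eq_fintype_card, Nat.card_congr (e2 j), Nat.card_prod,
          ih _ (by omega), ih _ (by omega)]
      simp_rw [this]
      rw [catalan_succ]


namespace PPAux
variable {m : ℕ}

/-- Clamped extension of `a` to all of `ℕ`. -/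
def A (hm : 0 < m) (a : CatSeq m) (k : ℕ) : ℕ := a.1 ⟨min k (m - 1), by omega⟩

lemma A_mono (hm : 0 < m) (a : CatSeq m) : Monotone (A hm a) := fun u v huv =>
  a.2.1 (show Fin.mk _ _ ≤ Fin.mk _ _ from by simp only [Fin.mk_le_mk]; omega)

lemma A_le (hm : 0 < m) (a : CatSeq m) (k : ℕ) : A hm a k ≤ min k (m - 1) := a.2.2 _

lemma A_zero (hm : 0 < m) (a : CatSeq m) : A hm a 0 = 0 := by
  have := A_le hm a 0; omega

lemma A_clamp (hm : 0 < m) (a : CatSeq m) {k : ℕ} (hk : m - 1 ≤ k) :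
    A hm a k = A hm a (m - 1) :=
  congrArg a.1 (Fin.ext (by simp only [Fin.val_mk]; omega))

lemma A_val (hm : 0 < m) (a : CatSeq m) {k : ℕ} (hk : k < m) :
    A hm a k = a.1 ⟨k, hk⟩ :=
  congrArg a.1 (Fin.ext (by simp only [Fin.val_mk]; omega))

/-- Number of ascents of `A` strictly below `k`. -/
def iota (hm : 0 < m) (a : CatSeq m) (k : ℕ) : ℕ :=
  ((Finset.range k).filter (fun j => A hm a j ≠ A hm a (j + 1))).card

variable (hm : 0 < m) (a : CatSeq m)

lemma iota_zero : iota hm a 0 = 0 := by simp [iota]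

lemma iota_succ (k : ℕ) : iota hm a (k + 1) =
    if A hm a k ≠ A hm a (k + 1) then iota hm a k + 1 else iota hm a k := by
  unfold iota
  rw [Finset.range_add_one, Finset.filter_insert]
  split_ifs with h
  · rw [Finset.card_insert_of_notMem (by simp)]
  · rfl

lemma iota_step (k : ℕ) : iota hm a (k + 1) ≤ iota hm a k + 1 := by
  rw [iota_succ]; split_ifs <;> omega

lemma iota_mono : Monotone (iota hm a) := fun u v huv =>
  Finset.card_le_card (Finset.filter_subset_filter _ (Finset.range_subset_range.mpr huv))

lemma iota_le (k : ℕ) : iota hm a k ≤ k :=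
  le_trans (Finset.card_filter_le _ _) (by simp)

lemma A_succ_eq {k : ℕ} (h : iota hm a (k + 1) = iota hm a k) :
    A hm a (k + 1) = A hm a k := by
  rw [iota_succ] at h
  by_cases hne : A hm a k ≠ A hm a (k + 1)
  · rw [if_pos hne] at h; omega
  · push_neg at hne; exact hne.symm

lemma A_succ_lt {k : ℕ} (h : iota hm a (k + 1) ≠ iota hm a k) :
    A hm a k + 1 ≤ A hm a (k + 1) := by
  by_cases hne : A hm a k ≠ A hm a (k + 1)
  · have h1 : A hm a k ≤ A hm a (k + 1) := A_mono hm a (by omega)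
    omega
  · rw [iota_succ, if_neg hne] at h
    exact absurd rfl h

/-- Start of the `i`-th run. -/
def pf (i : ℕ) : ℕ :=
  Nat.find (p := fun k => i ≤ iota hm a k ∨ m ≤ k) ⟨m, Or.inr le_rfl⟩

/-- End of the `i`-th run. -/
def qf (i : ℕ) : ℕ := Nat.findGreatest (fun k => iota hm a k ≤ i) (m - 1)

variable {i : ℕ}

lemma pf_le (hi : i ≤ iota hm a (m - 1)) : pf hm a i ≤ m - 1 :=
  Nat.find_le (Or.inl hi)

lemma pf_spec (hi : i ≤ iota hm a (m - 1)) : i ≤ iota hm a (pf hm a i) := by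
  rcases Nat.find_spec (p := fun k => i ≤ iota hm a k ∨ m ≤ k) ⟨m, Or.inr le_rfl⟩ with h | h
  · exact h
  · exact absurd (le_trans h (pf_le hm a hi)) (by omega)

lemma pf_min {k : ℕ} (hk : k < pf hm a i) : iota hm a k < i := by
  have h1 := Nat.find_min (p := fun k => i ≤ iota hm a k ∨ m ≤ k) ⟨m, Or.inr le_rfl⟩ hk
  have h2 := (not_or.mp h1).1
  omega

lemma iota_pf (hi : i ≤ iota hm a (m - 1)) : iota hm a (pf hm a i) = i := by
  rcases Nat.eq_zero_or_pos (pf hm a i) with h0 | h0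
  · have h1 := pf_spec hm a hi
    rw [h0] at h1 ⊢
    have := iota_zero hm a
    omega
  · have h1 := pf_min hm a (i := i) (k := pf hm a i - 1) (by omega)
    have h2 := iota_step hm a (pf hm a i - 1)
    have h3 := pf_spec hm a hi
    have h4 : pf hm a i - 1 + 1 = pf hm a i := by omega
    rw [h4] at h2
    omega

lemma pf_ge (hi : i ≤ iota hm a (m - 1)) : i ≤ pf hm a i :=
  le_trans (pf_spec hm a hi) (iota_le hm a _)

lemma pf_zero : pf hm a 0 = 0 :=
  Nat.find_eq_zero _ |>.mpr (Or.inl (Nat.zero_le _))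

lemma qf_le : qf hm a i ≤ m - 1 := Nat.findGreatest_le _

lemma qf_spec : iota hm a (qf hm a i) ≤ i :=
  Nat.findGreatest_spec (P := fun k => iota hm a k ≤ i) (Nat.zero_le (m - 1))
    (show iota hm a 0 ≤ i by rw [iota_zero]; exact Nat.zero_le i)

lemma pf_le_qf (hi : i ≤ iota hm a (m - 1)) : pf hm a i ≤ qf hm a i :=
  Nat.le_findGreatest (pf_le hm a hi) (le_of_eq (iota_pf hm a hi))

lemma iota_qf (hi : i ≤ iota hm a (m - 1)) : iota hm a (qf hm a i) = i :=
  le_antisymm (qf_spec hm a) (le_of_eq_of_le (iota_pf hm a hi).symm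
    (iota_mono hm a (pf_le_qf hm a hi)))

lemma qf_lt (hi : i < iota hm a (m - 1)) : qf hm a i < m - 1 := by
  have h1 := iota_qf hm a (le_of_lt hi)
  have h2 := qf_le hm a (i := i)
  rcases lt_or_eq_of_le h2 with h | h
  · exact h
  · rw [h] at h1; omega

lemma iota_qf_succ (hi : i < iota hm a (m - 1)) :
    iota hm a (qf hm a i + 1) = i + 1 := by
  have h1 : ¬ iota hm a (qf hm a i + 1) ≤ i :=
    Nat.findGreatest_is_greatest (P := fun k => iota hm a k ≤ i) (n := m - 1)
      (Nat.lt_succ_self _) (by have := qf_lt hm a hi; omega)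
  have h2 := iota_step hm a (qf hm a i)
  have h3 := iota_qf hm a (le_of_lt hi)
  omega

lemma pf_succ (hi : i < iota hm a (m - 1)) : pf hm a (i + 1) = qf hm a i + 1 := by
  apply le_antisymm
  · exact Nat.find_le (Or.inl (le_of_eq (iota_qf_succ hm a hi).symm))
  · by_contra h
    push_neg at h
    have h1 : pf hm a (i + 1) ≤ qf hm a i := by omega
    have h2 := iota_mono hm a h1
    have h3 := iota_qf hm a (le_of_lt hi)
    have h4 := pf_spec hm a (i := i + 1) (by omega)
    omega

lemma qf_last : qf hm a (iota hm a (m - 1)) = m - 1 :=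
  le_antisymm (qf_le hm a) (Nat.le_findGreatest le_rfl le_rfl)

/-- `A` is constant on each run. -/
lemma A_run : ∀ k, k ≤ m - 1 → A hm a k = A hm a (pf hm a (iota hm a k)) := by
  intro k
  induction k using Nat.strong_induction_on with
  | _ k ih =>
    intro hk
    have hple : pf hm a (iota hm a k) ≤ k := Nat.find_le (Or.inl le_rfl)
    rcases lt_or_eq_of_le hple with hlt | heq
    · have hk1 : 1 ≤ k := by omega
      have hio : iota hm a (k - 1) = iota hm a k := by
        apply le_antisymm (iota_mono hm a (by omega))
        by_contra hcon
        push_neg at hcon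
        have hge : k - 1 < pf hm a (iota hm a k) := by
          unfold pf
          rw [Nat.lt_find_iff]
          intro j hj
          rw [not_or]
          constructor
          · have := iota_mono hm a (show j ≤ k - 1 by omega)
            omega
          · omega
        omega
      have hA : A hm a (k - 1 + 1) = A hm a (k - 1) := by
        apply A_succ_eq
        rw [show k - 1 + 1 = k from by omega, hio]
      rw [show k - 1 + 1 = k from by omega] at hA
      rw [hA, ← hio]
      exact ih (k - 1) (by omega) (by omega)
    · rw [heq]
lemma A_pf_le (i : ℕ) : A hm a (pf hm a i) ≤ pf hm a i :=
  le_trans (A_le hm a _) (min_le_left _ _)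

lemma A_pf_step (hi : i < iota hm a (m - 1)) :
    A hm a (pf hm a i) + 1 ≤ A hm a (pf hm a (i + 1)) := by
  rw [pf_succ hm a hi]
  have h1 : iota hm a (qf hm a i + 1) ≠ iota hm a (qf hm a i) := by
    rw [iota_qf_succ hm a hi, iota_qf hm a (le_of_lt hi)]; omega
  have h2 := A_succ_lt hm a h1
  have h3 : A hm a (qf hm a i) = A hm a (pf hm a (iota hm a (qf hm a i))) :=
    A_run hm a (qf hm a i) (qf_le hm a)
  rw [iota_qf hm a (le_of_lt hi)] at h3
  omega

lemma A_pf_ge : ∀ i, i ≤ iota hm a (m - 1) → i ≤ A hm a (pf hm a i) := by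
  intro i
  induction i with
  | zero => intro _; exact Nat.zero_le _
  | succ i ih =>
    intro hi
    have h1 := ih (by omega)
    have h2 := A_pf_step hm a (i := i) (by omega)
    omega

lemma A_pf_add (d : ℕ) : i + d ≤ iota hm a (m - 1) →
    A hm a (pf hm a i) + d ≤ A hm a (pf hm a (i + d)) := by
  induction d with
  | zero => intro _; simp
  | succ d ih =>
    intro h
    have h1 := ih (by omega)
    have h2 := A_pf_step hm a (i := i + d) (by omega)
    rw [show i + (d + 1) = i + d + 1 from by omega]
    omega

lemma qf_step (hi : i < iota hm a (m - 1)) : qf hm a i + 1 ≤ qf hm a (i + 1) := by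
  rw [← pf_succ hm a hi]
  exact pf_le_qf hm a (by omega)

lemma qf_add (d : ℕ) : i + d ≤ iota hm a (m - 1) → qf hm a i + d ≤ qf hm a (i + d) := by
  induction d with
  | zero => intro _; simp
  | succ d ih =>
    intro h
    have h1 := ih (by omega)
    have h2 := qf_step hm a (i := i + d) (by omega)
    rw [show i + (d + 1) = i + d + 1 from by omega]
    omega

lemma qf_ge (hi : i ≤ iota hm a (m - 1)) : i ≤ qf hm a i :=
  le_trans (pf_ge hm a hi) (pf_le_qf hm a hi)

/-- The parallelogram polyomino associated to a staircase sequence. -/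
def toPoly : ParallelogramPolyomino where
  w := iota hm a (m - 1) + 1
  hw := Nat.succ_pos _
  b := fun i => A hm a (pf hm a i.1) - i.1
  t := fun i => qf hm a i.1 - i.1
  hbt := fun i => by
    have h1 := A_pf_le hm a i.1
    have h2 : pf hm a i.1 ≤ qf hm a i.1 := pf_le_qf hm a (by have := i.isLt; omega)
    omega
  hbmono := fun i i' hii' => by
    have hii : i.1 ≤ i'.1 := hii'
    have h1 := A_pf_add hm a (i := i.1) (i'.1 - i.1) (by have := i'.isLt; omega)
    have h2 := A_pf_ge hm a i.1 (by have := i.isLt; omega)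
    rw [show i.1 + (i'.1 - i.1) = i'.1 from by omega] at h1
    simp only
    omega
  htmono := fun i i' hii' => by
    have hii : i.1 ≤ i'.1 := hii'
    have h1 := qf_add hm a (i := i.1) (i'.1 - i.1) (by have := i'.isLt; omega)
    have h2 := qf_ge hm a (i := i.1) (by have := i.isLt; omega)
    rw [show i.1 + (i'.1 - i.1) = i'.1 from by omega] at h1
    simp only
    omega
  hconn := fun i j hji => by
    have hi' : i.1 < iota hm a (m - 1) := by have := j.isLt; omega
    have h1 : pf hm a j.1 = qf hm a i.1 + 1 := by rw [hji]; exact pf_succ hm a hi'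
    have h2 := A_pf_le hm a j.1
    have h3 := qf_ge hm a (i := i.1) (le_of_lt hi')
    omega
  hb0 := by
    show A hm a (pf hm a 0) - 0 = 0
    rw [pf_zero hm a, A_zero hm a]

lemma toPoly_perim : (toPoly hm a).perimeter = 2 * (m + 1) := by
  have h1 : qf hm a (iota hm a (m - 1)) = m - 1 := qf_last hm a
  have h2 := iota_le hm a (m - 1)
  unfold ParallelogramPolyomino.perimeter ParallelogramPolyomino.height toPoly
  simp only [Nat.add_sub_cancel]
  omega

end PPAux

namespace PPAux

/-- Clamped top profile of a polyomino. -/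
def Tt (P : ParallelogramPolyomino) (i : ℕ) : ℕ :=
  P.t ⟨min i (P.w - 1), by have := P.hw; omega⟩

/-- Clamped bottom profile of a polyomino. -/
def Bb (P : ParallelogramPolyomino) (i : ℕ) : ℕ :=
  P.b ⟨min i (P.w - 1), by have := P.hw; omega⟩

/-- The column containing staircase position `k`. -/
def idx (P : ParallelogramPolyomino) (k : ℕ) : ℕ :=
  Nat.find (p := fun i => k ≤ Tt P i + i ∨ P.w - 1 ≤ i) ⟨P.w - 1, Or.inr le_rfl⟩

variable (P : ParallelogramPolyomino)

lemma Tt_mono : Monotone (Tt P) := fun u v huv =>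
  P.htmono (show Fin.mk _ _ ≤ Fin.mk _ _ from by simp only [Fin.mk_le_mk]; omega)

lemma Bb_mono : Monotone (Bb P) := fun u v huv =>
  P.hbmono (show Fin.mk _ _ ≤ Fin.mk _ _ from by simp only [Fin.mk_le_mk]; omega)

lemma Bb_le_Tt (i : ℕ) : Bb P i ≤ Tt P i := P.hbt _

lemma Bb_eq {i : ℕ} (h : i ≤ P.w - 1) : Bb P i = P.b ⟨i, by have := P.hw; omega⟩ :=
  congrArg P.b (Fin.ext (by simp only [Fin.val_mk]; omega))

lemma Tt_eq {i : ℕ} (h : i ≤ P.w - 1) : Tt P i = P.t ⟨i, by have := P.hw; omega⟩ :=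
  congrArg P.t (Fin.ext (by simp only [Fin.val_mk]; omega))

lemma Bb_zero : Bb P 0 = 0 := by
  rw [Bb_eq P (Nat.zero_le _)]
  have := P.hb0
  exact (congrArg P.b (Fin.ext rfl)).trans this

lemma Bb_conn {i : ℕ} (h : i + 1 ≤ P.w - 1) : Bb P (i + 1) ≤ Tt P i := by
  rw [Bb_eq P h, Tt_eq P (by omega)]
  exact P.hconn _ _ (by simp only [Fin.val_mk])

lemma idx_le (k : ℕ) : idx P k ≤ P.w - 1 := Nat.find_le (Or.inr le_rfl)

lemma idx_spec {k : ℕ} (hk : k ≤ Tt P (P.w - 1) + (P.w - 1)) :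
    k ≤ Tt P (idx P k) + idx P k := by
  rcases Nat.find_spec (p := fun i => k ≤ Tt P i + i ∨ P.w - 1 ≤ i)
    ⟨P.w - 1, Or.inr le_rfl⟩ with h | h
  · exact h
  · have he : idx P k = P.w - 1 := le_antisymm (idx_le P k) h
    rw [he]; exact hk

lemma idx_min {k j : ℕ} (hj : j < idx P k) : Tt P j + j < k ∧ j < P.w - 1 := by
  have h1 := Nat.find_min (p := fun i => k ≤ Tt P i + i ∨ P.w - 1 ≤ i)
    ⟨P.w - 1, Or.inr le_rfl⟩ hj
  have h2 := not_or.mp h1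
  exact ⟨by omega, by omega⟩

lemma idx_mono {k k' : ℕ} (h : k ≤ k') : idx P k ≤ idx P k' :=
  Nat.find_mono (fun i hi => hi.imp (fun h2 => le_trans h h2) id)

lemma idx_zero : idx P 0 = 0 :=
  Nat.find_eq_zero _ |>.mpr (Or.inl (Nat.zero_le _))

lemma idx_succ_le {k : ℕ} (hk : k ≤ Tt P (P.w - 1) + (P.w - 1)) :
    idx P (k + 1) ≤ idx P k + 1 := by
  apply Nat.find_le
  rcases le_or_gt (P.w - 1) (idx P k + 1) with h | h
  · exact Or.inr h
  · left
    have h1 := idx_spec P hk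
    have h2 : Tt P (idx P k) ≤ Tt P (idx P k + 1) := Tt_mono P (Nat.le_succ _)
    omega

/-- The staircase value associated to a polyomino at position `k`. -/
def FtoSeq (P : ParallelogramPolyomino) (k : ℕ) : ℕ := Bb P (idx P k) + idx P k

lemma FtoSeq_mono : Monotone (FtoSeq P) := fun u v huv => by
  have h1 := idx_mono P huv
  have h2 := Bb_mono P h1
  unfold FtoSeq
  omega

lemma FtoSeq_le {k : ℕ} (hk : k ≤ Tt P (P.w - 1) + (P.w - 1)) : FtoSeq P k ≤ k := by
  unfold FtoSeq
  rcases Nat.eq_zero_or_pos (idx P k) with h0 | h0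
  · rw [h0, Bb_zero P]; omega
  · obtain ⟨h1, h2⟩ := idx_min P (k := k) (j := idx P k - 1) (by omega)
    have h3 : Bb P (idx P k) ≤ Tt P (idx P k - 1) := by
      have := Bb_conn P (i := idx P k - 1) (by omega)
      rw [show idx P k - 1 + 1 = idx P k from by omega] at this
      exact this
    omega

end PPAux

namespace RT1
variable {m : ℕ} (hm : 0 < m) (a : CatSeq m)
open PPAux

lemma toPoly_w : (toPoly hm a).w = iota hm a (m - 1) + 1 := rfl

lemma Tt_toPoly {j : ℕ} (hj : j ≤ iota hm a (m - 1)) :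
    Tt (toPoly hm a) j = qf hm a j - j := by
  have hw : (toPoly hm a).w = iota hm a (m - 1) + 1 := rfl
  rw [Tt_eq (toPoly hm a) (by omega)]
  rfl

lemma Bb_toPoly {j : ℕ} (hj : j ≤ iota hm a (m - 1)) :
    Bb (toPoly hm a) j = A hm a (pf hm a j) - j := by
  have hw : (toPoly hm a).w = iota hm a (m - 1) + 1 := rfl
  rw [Bb_eq (toPoly hm a) (by omega)]
  rfl

lemma idx_toPoly {k : ℕ} (hk : k ≤ m - 1) :
    idx (toPoly hm a) k = iota hm a k := by
  unfold idx
  rw [Nat.find_eq_iff]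
  have hiW : iota hm a k ≤ iota hm a (m - 1) := iota_mono hm a hk
  refine ⟨Or.inl ?_, ?_⟩
  · rw [Tt_toPoly hm a hiW]
    have h1 : k ≤ qf hm a (iota hm a k) :=
      Nat.le_findGreatest hk le_rfl
    have h2 : iota hm a k ≤ qf hm a (iota hm a k) := qf_ge hm a hiW
    omega
  · intro j hj
    rw [not_or]
    have hjW : j < iota hm a (m - 1) := lt_of_lt_of_le hj hiW
    constructor
    · rw [Tt_toPoly hm a (le_of_lt hjW)]
      have h1 : qf hm a j < k := by
        by_contra hcon
        push_neg at hcon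
        have h2 := iota_mono hm a hcon
        rw [iota_qf hm a (le_of_lt hjW)] at h2
        omega
      have h2 := qf_ge hm a (le_of_lt hjW)
      omega
    · show ¬ (toPoly hm a).w - 1 ≤ j
      have hw : (toPoly hm a).w = iota hm a (m - 1) + 1 := rfl
      omega

lemma FtoSeq_toPoly {k : ℕ} (hk : k < m) :
    FtoSeq (toPoly hm a) k = a.1 ⟨k, hk⟩ := by
  unfold FtoSeq
  have hiW : iota hm a k ≤ iota hm a (m - 1) := iota_mono hm a (by omega)
  rw [idx_toPoly hm a (by omega), Bb_toPoly hm a hiW]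
  have h1 := A_pf_ge hm a (iota hm a k) hiW
  have h2 : A hm a k = A hm a (pf hm a (iota hm a k)) := A_run hm a k (by omega)
  have h3 : A hm a k = a.1 ⟨k, hk⟩ := A_val hm a hk
  omega

end RT1

namespace RT2
open PPAux
variable {m : ℕ} (hm : 0 < m) (P : ParallelogramPolyomino)
  (hM : Tt P (P.w - 1) + (P.w - 1) = m - 1)

/-- The staircase sequence of a polyomino. -/
def toSeq : CatSeq m :=
  ⟨fun k => FtoSeq P k.1,
   fun u v huv => FtoSeq_mono P (show u.1 ≤ v.1 from huv),
   fun k => FtoSeq_le P (by have := k.isLt; omega)⟩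

lemma A_toSeq {k : ℕ} (hk : k ≤ m - 1) :
    A hm (toSeq hm P hM) k = FtoSeq P k := by
  show FtoSeq P (min k (m - 1)) = FtoSeq P k
  rw [min_eq_left hk]

lemma iota_toSeq : ∀ k, k ≤ m - 1 → iota hm (toSeq hm P hM) k = idx P k := by
  intro k
  induction k with
  | zero => intro _; rw [iota_zero, idx_zero]
  | succ k ih =>
    intro hk
    show iota hm (toSeq hm P hM) (k + 1) = idx P (k + 1)
    have ihk := ih (by omega)
    have hstep := idx_succ_le P (k := k) (by omega)
    have hmono := idx_mono P (show k ≤ k + 1 by omega)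
    have hA1 : A hm (toSeq hm P hM) k = FtoSeq P k := A_toSeq hm P hM (by omega)
    have hA2 : A hm (toSeq hm P hM) (k + 1) = FtoSeq P (k + 1) := A_toSeq hm P hM (by omega)
    rw [iota_succ, hA1, hA2, ihk]
    rcases eq_or_lt_of_le hmono with heq | hlt
    · rw [if_neg (by unfold FtoSeq; rw [← heq]; simp)]
      exact heq
    · have hidx : idx P (k + 1) = idx P k + 1 := by omega
      have hBb := Bb_mono P (show idx P k ≤ idx P (k + 1) from hmono)
      rw [if_pos (by unfold FtoSeq; omega)]
      omega

include hM in
lemma idx_last : idx P (m - 1) = P.w - 1 := by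
  unfold idx
  rw [Nat.find_eq_iff]
  refine ⟨Or.inr le_rfl, ?_⟩
  intro j hj
  rw [not_or]
  refine ⟨?_, by omega⟩
  have h1 : Tt P j ≤ Tt P (P.w - 1) := Tt_mono P (by omega)
  omega

lemma w_toPoly : (toPoly hm (toSeq hm P hM)).w = P.w := by
  show iota hm (toSeq hm P hM) (m - 1) + 1 = P.w
  rw [iota_toSeq hm P hM (m - 1) le_rfl, idx_last P hM]
  have := P.hw
  omega

lemma qf_toSeq {i : ℕ} (hi : i ≤ P.w - 1) :
    qf hm (toSeq hm P hM) i = Tt P i + i := by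
  have hTle : Tt P i + i ≤ m - 1 := by
    have := Tt_mono P hi
    omega
  apply le_antisymm
  · by_contra hcon
    push_neg at hcon
    have hqle : qf hm (toSeq hm P hM) i ≤ m - 1 := qf_le hm _
    rcases eq_or_lt_of_le hi with heq | hlt
    · subst heq
      omega
    · have h2 := qf_spec hm (toSeq hm P hM) (i := i)
      rw [iota_toSeq hm P hM _ hqle] at h2
      have h3 : i < idx P (qf hm (toSeq hm P hM) i) := by
        unfold idx
        rw [Nat.lt_find_iff]
        intro j hj
        rw [not_or]
        refine ⟨?_, by omega⟩
        have := Tt_mono P (show j ≤ i from hj)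
        omega
      omega
  · apply Nat.le_findGreatest hTle
    show iota hm (toSeq hm P hM) (Tt P i + i) ≤ i
    rw [iota_toSeq hm P hM _ hTle]
    exact Nat.find_le (Or.inl le_rfl)

lemma A_pf_toSeq {i : ℕ} (hi : i ≤ P.w - 1) :
    A hm (toSeq hm P hM) (pf hm (toSeq hm P hM) i) = Bb P i + i := by
  have hiW : i ≤ iota hm (toSeq hm P hM) (m - 1) := by
    rw [iota_toSeq hm P hM _ le_rfl, idx_last P hM]; exact hi
  have h1 : pf hm (toSeq hm P hM) i ≤ m - 1 := pf_le hm _ hiW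
  rw [A_toSeq hm P hM h1]
  unfold FtoSeq
  have h2 : idx P (pf hm (toSeq hm P hM) i) = i := by
    rw [← iota_toSeq hm P hM _ h1]
    exact iota_pf hm _ hiW
  rw [h2]

end RT2

lemma PP_ext (P Q : ParallelogramPolyomino) (hw : P.w = Q.w)
    (hb : ∀ (k : ℕ) (h1 : k < P.w) (h2 : k < Q.w), P.b ⟨k, h1⟩ = Q.b ⟨k, h2⟩)
    (ht : ∀ (k : ℕ) (h1 : k < P.w) (h2 : k < Q.w), P.t ⟨k, h1⟩ = Q.t ⟨k, h2⟩) : P = Q := by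
  obtain ⟨w1, hw1, b1, t1, x1, x2, x3, x4, x5⟩ := P
  obtain ⟨w2, hw2, b2, t2, y1, y2, y3, y4, y5⟩ := Q
  simp only at hw hb ht
  subst hw
  have hb' : b1 = b2 := funext fun k => hb k.1 k.isLt k.isLt
  have ht' : t1 = t2 := funext fun k => ht k.1 k.isLt k.isLt
  subst hb'
  subst ht'
  rfl

lemma toPoly_toSeq {m : ℕ} (hm : 0 < m) (P : ParallelogramPolyomino)
    (hM : PPAux.Tt P (P.w - 1) + (P.w - 1) = m - 1) :
    PPAux.toPoly hm (RT2.toSeq hm P hM) = P := by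
  open PPAux RT2 in
  apply PP_ext _ _ (w_toPoly hm P hM)
  · intro k h1 h2
    show A hm (toSeq hm P hM) (pf hm (toSeq hm P hM) k) - k = P.b ⟨k, h2⟩
    rw [A_pf_toSeq hm P hM (by omega)]
    rw [Bb_eq P (by omega)]
    have : P.b ⟨k, by have := P.hw; omega⟩ = P.b ⟨k, h2⟩ := rfl
    omega
  · intro k h1 h2
    show qf hm (toSeq hm P hM) k - k = P.t ⟨k, h2⟩
    rw [qf_toSeq hm P hM (by omega)]
    rw [Tt_eq P (by omega)]
    have : P.t ⟨k, by have := P.hw; omega⟩ = P.t ⟨k, h2⟩ := rfl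
    omega


/-- The number of parallelogram polyominoes with perimeter `2n` is the Catalan
number `C_{n-1}`. -/
theorem card_parallelogram_polyomino (n : ℕ) (hn : 2 ≤ n) :
    Nat.card {P : ParallelogramPolyomino // P.perimeter = 2 * n}
      = catalan (n - 1) := by
  have hm : 0 < n - 1 := by omega
  have hbij : Function.Bijective
      (fun a : CatSeq (n - 1) =>
        (⟨PPAux.toPoly hm a, by
          rw [PPAux.toPoly_perim hm a]; omega⟩ :
          {P : ParallelogramPolyomino // P.perimeter = 2 * n})) := by
    constructor
    · intro a1 a2 h
      have h' : PPAux.toPoly hm a1 = PPAux.toPoly hm a2 := congrArg Subtype.val h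
      apply Subtype.ext
      funext k
      have e1 := RT1.FtoSeq_toPoly hm a1 (k := k.1) k.isLt
      have e2 := RT1.FtoSeq_toPoly hm a2 (k := k.1) k.isLt
      rw [h'] at e1
      exact e1.symm.trans e2
    · rintro ⟨P, hP⟩
      have h2 : PPAux.Tt P (P.w - 1) = P.t ⟨P.w - 1, Nat.sub_lt P.hw Nat.one_pos⟩ := by
        rw [PPAux.Tt_eq P le_rfl]
      have h1 : P.perimeter = 2 * (P.w + (P.t ⟨P.w - 1, Nat.sub_lt P.hw Nat.one_pos⟩ + 1)) := rfl
      have hM : PPAux.Tt P (P.w - 1) + (P.w - 1) = n - 1 - 1 := by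
        have := P.hw
        omega
      refine ⟨RT2.toSeq hm P hM, ?_⟩
      apply Subtype.ext
      show PPAux.toPoly hm (RT2.toSeq hm P hM) = P
      exact toPoly_toSeq hm P hM
  rw [← Nat.card_eq_of_bijective _ hbij]
  exact catSeq_card (n - 1)
end

section
/- Let e(r,s) and f_{j}(r,s) for j ∈ J ⊆ ({-1}∪ℕ)² be formal power series in x, q, r, s over a commutative ring, with J finite. Then there exists a unique formal power series F(r,s) satisfying F(r,s) = e(r,s) + Σ_{(j₁,j₂)∈J} x·f_{(j₁,j₂)}(r,s)·F(σ_{j₁}(r), σ_{j₂}(s)), where σ_j(v) = 1 if j = −1 and σ_j(v) = q^j v if j ≥ 0. Moreover F is given by the explicit sum F(r,s) = Σ_{n≥0} x^n Σ_{J=(𝐣_1,…,𝐣_n), 𝐣_k∈J} e(q^{a_{1,n+1}} r^{b_{1,n+1}}, q^{a_{2,n+1}} s^{b_{2,n+1}}) ∏_{k=1}^n f_{𝐣_k}(q^{a_{1,k}} r^{b_{1,k}}, q^{a_{2,k}} s^{b_{2,k}}), where for each coordinate i ∈ {1,2}: a_{i,1}=0, b_{i,1}=1, and for k ≥ 2,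 if −1 occurs among j_{i,1},…,j_{i,k−1} then b_{i,k}=0 and a_{i,k} is the sum of the entries after the last occurrence of −1, while otherwise b_{i,k}=1 and a_{i,k} is the sum of all entries j_{i,1},…,j_{i,k−1}. -/
noncomputable section

variable (R : Type*) [CommRing R]

/-- The coefficient ring `R[[q]][r,s]`: polynomials in `r` (variable 0) and `s`
(variable 1) over formal power series in `q`.  Power series in `x` over this
ring model series in `x, q, r, s` for which the substitutions `r ↦ 1`,
`r ↦ q^j r`, `s ↦ 1`, `s ↦ q^j s` make sense. -/
abbrev RS := MvPolynomial (Fin 2) (PowerSeries R)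

/-- The image of variable `i` under `σ_j`: `1` if `j = -1` (encoded `none`),
and `q^j·(variable i)` if `j ≥ 0` (encoded `some j`). -/
def sigOpt (o : Option ℕ) (i : Fin 2) : RS R :=
  match o with
  | none => 1
  | some j => MvPolynomial.C (PowerSeries.X ^ j) * MvPolynomial.X i

/-- The substitution `(r,s) ↦ (σ_{j₁}(r), σ_{j₂}(s))` for `𝐣 = (j₁,j₂)`. -/
def sig2 (p : Option ℕ × Option ℕ) : RS R →+* RS R :=
  (MvPolynomial.aeval ![sigOpt R p.1 0, sigOpt R p.2 1]).toRingHom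

/-- `a_{i,k}` for a coordinate sequence `c` over `{-1,0,1,2,…}` (with `-1`
encoded as `none`): the sum of the entries among the first `k` after the last
occurrence of `-1` (or of all of them if `-1` does not occur). -/
def A2 (c : ℕ → Option ℕ) (k : ℕ) : ℕ :=
  ∑ i ∈ Finset.range k,
    if ∀ j ∈ Finset.Ioo i k, c j ≠ none then (c i).getD 0 else 0

/-- `b_{i,k}`: equals `1` if `-1` (i.e. `none`) does not occur among the first
`k` entries of the coordinate sequence `c`, else `0`. -/
def B2 (c : ℕ → Option ℕ) (k : ℕ) : ℕ :=
  if ∀ i < k, c i ≠ none then 1 else 0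

/-- Extend a finite sequence of pairs to all of `ℕ` (values beyond `n` are
irrelevant). -/
def extPair (n : ℕ) (w : Fin n → Option ℕ × Option ℕ) : ℕ → Option ℕ × Option ℕ :=
  fun i => if h : i < n then w ⟨i, h⟩ else (some 0, some 0)

/-- The substitution `(r,s) ↦ (q^{a₁} r^{b₁}, q^{a₂} s^{b₂})`. -/
def subAB2 (a₁ b₁ a₂ b₂ : ℕ) : RS R →+* RS R :=
  (MvPolynomial.aeval
    ![MvPolynomial.C (PowerSeries.X ^ a₁) * MvPolynomial.X (0 : Fin 2) ^ b₁,
      MvPolynomial.C (PowerSeries.X ^ a₂) * MvPolynomial.X (1 : Fin 2) ^ b₂]).toRingHom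

/-- The explicit solution
`F(r,s) = Σ_{n≥0} x^n Σ_{J=(𝐣_1,…,𝐣_n), 𝐣_k∈𝒥}
  e(q^{a_{1,n+1}} r^{b_{1,n+1}}, q^{a_{2,n+1}} s^{b_{2,n+1}})
  ∏_{k=1}^n f_{𝐣_k}(q^{a_{1,k}} r^{b_{1,k}}, q^{a_{2,k}} s^{b_{2,k}})`. -/
def Fsol2 (Jset : Finset (Option ℕ × Option ℕ)) (e : RS R)
    (f : Option ℕ × Option ℕ → RS R) : PowerSeries (RS R) :=
  PowerSeries.mk fun n =>
    ∑ w : Fin n → {p // p ∈ Jset},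
      (fun c : ℕ → Option ℕ × Option ℕ =>
        subAB2 R (A2 (fun i => (c i).1) n) (B2 (fun i => (c i).1) n)
                 (A2 (fun i => (c i).2) n) (B2 (fun i => (c i).2) n) e *
        ∏ k : Fin n,
          subAB2 R (A2 (fun i => (c i).1) k) (B2 (fun i => (c i).1) k)
                   (A2 (fun i => (c i).2) k) (B2 (fun i => (c i).2) k)
            (f (w k)))
      (extPair n fun k => (w k : Option ℕ × Option ℕ))

-- helper lemmas

def consN {α : Type*} (o : α) (c : ℕ → α) : ℕ → α :=
  fun i => match i with | 0 => o | s+1 => c s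

lemma A2_zero (c : ℕ → Option ℕ) : A2 c 0 = 0 := by simp [A2]

lemma B2_zero (c : ℕ → Option ℕ) : B2 c 0 = 1 := by simp [B2]

lemma B2_cons (o : Option ℕ) (c : ℕ → Option ℕ) (k : ℕ) :
    B2 (consN o c) (k+1) = (if o = none then 0 else 1) * B2 c k := by
  unfold B2
  by_cases ho : o = none
  · have h : ¬ ∀ i < k+1, consN o c i ≠ none := by
      intro h
      exact h 0 (Nat.succ_pos k) (by simp [consN, ho])
    rw [if_neg h]
    simp [ho]
  · have h : (∀ i < k+1, consN o c i ≠ none) ↔ (∀ i < k, c i ≠ none) := by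
      constructor
      · intro h s hs; exact h (s+1) (by omega)
      · intro h i hi
        match i with
        | 0 => exact ho
        | s+1 => exact h s (by omega)
    rw [if_congr h rfl rfl, if_neg ho, one_mul]

lemma A2_cons (o : Option ℕ) (c : ℕ → Option ℕ) (k : ℕ) :
    A2 (consN o c) (k+1) = o.getD 0 * B2 c k + A2 c k := by
  unfold A2
  rw [Finset.sum_range_succ']
  have h0 : (∀ j ∈ Finset.Ioo 0 (k+1), consN o c j ≠ none) ↔ (∀ i < k, c i ≠ none) := by
    constructor
    · intro h s hs
      exact h (s+1) (by rw [Finset.mem_Ioo]; omega)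
    · intro h j hj
      rw [Finset.mem_Ioo] at hj
      match j with
      | 0 => omega
      | s+1 => exact h s (by omega)
  have h1 : ∀ i, (∀ j ∈ Finset.Ioo (i+1) (k+1), consN o c j ≠ none) ↔
      (∀ j ∈ Finset.Ioo i k, c j ≠ none) := by
    intro i
    constructor
    · intro h s hs
      rw [Finset.mem_Ioo] at hs
      exact h (s+1) (by rw [Finset.mem_Ioo]; omega)
    · intro h j hj
      rw [Finset.mem_Ioo] at hj
      match j with
      | 0 => omega
      | s+1 => exact h s (by rw [Finset.mem_Ioo]; omega)
  rw [Finset.sum_congr rfl (fun i _ => if_congr (h1 i) rfl rfl), if_congr h0 rfl rfl]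
  have e1 : ∀ i : ℕ, consN o c (i+1) = c i := fun i => rfl
  have e2 : consN o c 0 = o := rfl
  simp only [e1, e2]
  rw [add_comm]
  congr 1
  unfold B2
  by_cases h : ∀ i < k, c i ≠ none <;> simp [h]

lemma subAB2_C (a₁ b₁ a₂ b₂ : ℕ) (a : PowerSeries R) :
    subAB2 R a₁ b₁ a₂ b₂ (MvPolynomial.C a) = MvPolynomial.C a := by
  simp [subAB2, MvPolynomial.algebraMap_eq]

lemma subAB2_X0 (a₁ b₁ a₂ b₂ : ℕ) :
    subAB2 R a₁ b₁ a₂ b₂ (MvPolynomial.X 0)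
      = MvPolynomial.C (PowerSeries.X ^ a₁) * MvPolynomial.X (0 : Fin 2) ^ b₁ := by
  simp [subAB2]

lemma subAB2_X1 (a₁ b₁ a₂ b₂ : ℕ) :
    subAB2 R a₁ b₁ a₂ b₂ (MvPolynomial.X 1)
      = MvPolynomial.C (PowerSeries.X ^ a₂) * MvPolynomial.X (1 : Fin 2) ^ b₂ := by
  simp [subAB2]

lemma sig2_C (p : Option ℕ × Option ℕ) (a : PowerSeries R) :
    sig2 R p (MvPolynomial.C a) = MvPolynomial.C a := by
  simp [sig2, MvPolynomial.algebraMap_eq]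

lemma sig2_X0 (p : Option ℕ × Option ℕ) :
    sig2 R p (MvPolynomial.X 0) = sigOpt R p.1 0 := by
  simp [sig2]

lemma sig2_X1 (p : Option ℕ × Option ℕ) :
    sig2 R p (MvPolynomial.X 1) = sigOpt R p.2 1 := by
  simp [sig2]

lemma subAB2_id (y : RS R) : subAB2 R 0 1 0 1 y = y := by
  have : subAB2 R 0 1 0 1 = RingHom.id (RS R) := by
    apply MvPolynomial.ringHom_ext
    · intro r
      simp [subAB2_C]
    · intro i
      fin_cases i
      · show subAB2 R 0 1 0 1 (MvPolynomial.X 0) = MvPolynomial.X 0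
        rw [subAB2_X0]; simp
      · show subAB2 R 0 1 0 1 (MvPolynomial.X 1) = MvPolynomial.X 1
        rw [subAB2_X1]; simp
  rw [this]; rfl

lemma sig2_subAB2 (p : Option ℕ × Option ℕ) (a₁ b₁ a₂ b₂ : ℕ) (y : RS R) :
    sig2 R p (subAB2 R a₁ b₁ a₂ b₂ y)
      = subAB2 R (p.1.getD 0 * b₁ + a₁) ((if p.1 = none then 0 else 1) * b₁)
                 (p.2.getD 0 * b₂ + a₂) ((if p.2 = none then 0 else 1) * b₂) y := by
  have key : (sig2 R p).comp (subAB2 R a₁ b₁ a₂ b₂)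
      = subAB2 R (p.1.getD 0 * b₁ + a₁) ((if p.1 = none then 0 else 1) * b₁)
                 (p.2.getD 0 * b₂ + a₂) ((if p.2 = none then 0 else 1) * b₂) := by
    apply MvPolynomial.ringHom_ext
    · intro r
      simp [subAB2_C, sig2_C]
    · intro i
      fin_cases i
      · show sig2 R p (subAB2 R a₁ b₁ a₂ b₂ (MvPolynomial.X 0))
            = subAB2 R (p.1.getD 0 * b₁ + a₁) ((if p.1 = none then 0 else 1) * b₁)
                (p.2.getD 0 * b₂ + a₂) ((if p.2 = none then 0 else 1) * b₂) (MvPolynomial.X 0)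
        have hpow : sig2 R p (MvPolynomial.X (0 : Fin 2) ^ b₁) = (sigOpt R p.1 0) ^ b₁ := by
          rw [map_pow, sig2_X0]
        rw [subAB2_X0, subAB2_X0, map_mul, sig2_C, hpow]
        rcases hp : p.1 with _ | j
        · simp [hp, sigOpt]
        · simp only [hp, sigOpt, Option.getD_some, Option.some_ne_none, if_neg, one_mul,
            reduceIte]
          rw [mul_pow, ← map_pow, ← pow_mul, ← mul_assoc, ← map_mul, ← pow_add,
            Nat.add_comm a₁ (j * b₁)]
      · show sig2 R p (subAB2 R a₁ b₁ a₂ b₂ (MvPolynomial.X 1))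
            = subAB2 R (p.1.getD 0 * b₁ + a₁) ((if p.1 = none then 0 else 1) * b₁)
                (p.2.getD 0 * b₂ + a₂) ((if p.2 = none then 0 else 1) * b₂) (MvPolynomial.X 1)
        have hpow : sig2 R p (MvPolynomial.X (1 : Fin 2) ^ b₂) = (sigOpt R p.2 1) ^ b₂ := by
          rw [map_pow, sig2_X1]
        rw [subAB2_X1, subAB2_X1, map_mul, sig2_C, hpow]
        rcases hp : p.2 with _ | j
        · simp [hp, sigOpt]
        · simp only [hp, sigOpt, Option.getD_some, Option.some_ne_none, if_neg, one_mul,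
            reduceIte]
          rw [mul_pow, ← map_pow, ← pow_mul, ← mul_assoc, ← map_mul, ← pow_add,
            Nat.add_comm a₂ (j * b₂)]
  exact RingHom.congr_fun key y


lemma coeff_Fsol2_zero (Jset : Finset (Option ℕ × Option ℕ)) (e : RS R)
    (f : Option ℕ × Option ℕ → RS R) :
    PowerSeries.coeff (R := RS R) 0 (Fsol2 R Jset e f) = e := by
  rw [Fsol2, PowerSeries.coeff_mk]
  simp [A2_zero, B2_zero, subAB2_id]

lemma extPair_cons {Jset : Finset (Option ℕ × Option ℕ)} (n : ℕ)
    (p : {p // p ∈ Jset}) (w : Fin n → {p // p ∈ Jset}) :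
    (extPair (n+1) fun k => ((Fin.cons (α := fun _ => {p // p ∈ Jset}) p w k) : Option ℕ × Option ℕ))
      = consN (↑p) (extPair n fun k => ((w k : {p // p ∈ Jset}) : Option ℕ × Option ℕ)) := by
  funext i
  match i with
  | 0 =>
      show (if h : 0 < n+1 then ((Fin.cons (α := fun _ => {p // p ∈ Jset}) p w ⟨0, h⟩) : Option ℕ × Option ℕ)
          else (some 0, some 0)) = ↑p
      rw [dif_pos (Nat.succ_pos n)]
      rfl
  | s+1 =>
      show (if h : s+1 < n+1 then ((Fin.cons (α := fun _ => {p // p ∈ Jset}) p w ⟨s+1, h⟩) : Option ℕ × Option ℕ)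
          else (some 0, some 0))
        = (if h : s < n then ((w ⟨s, h⟩ : {p // p ∈ Jset}) : Option ℕ × Option ℕ)
          else (some 0, some 0))
      by_cases h : s < n
      · rw [dif_pos (by omega : s+1 < n+1), dif_pos h]
        exact congrArg Subtype.val (Fin.cons_succ (α := fun _ => ({p // p ∈ Jset} : Type _)) p w ⟨s, h⟩)
      · rw [dif_neg (by omega), dif_neg h]

lemma coeff_Fsol2_succ (Jset : Finset (Option ℕ × Option ℕ)) (e : RS R)
    (f : Option ℕ × Option ℕ → RS R) (n : ℕ) :
    PowerSeries.coeff (R := RS R) (n+1) (Fsol2 R Jset e f)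
      = ∑ p ∈ Jset, f p * sig2 R p (PowerSeries.coeff (R := RS R) n (Fsol2 R Jset e f)) := by
  rw [Fsol2]
  simp only [PowerSeries.coeff_mk]
  rw [← Equiv.sum_comp (Fin.consEquiv fun _ => ({p // p ∈ Jset} : Type _))]
  rw [Fintype.sum_prod_type]
  rw [← Finset.sum_attach Jset
    (fun p => f p * sig2 R p (∑ w : Fin n → {p // p ∈ Jset}, _))]
  rw [← Finset.univ_eq_attach]
  refine Finset.sum_congr rfl fun p _ => ?_
  rw [map_sum, Finset.mul_sum]
  refine Finset.sum_congr rfl fun w _ => ?_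
  show (fun c : ℕ → Option ℕ × Option ℕ =>
        subAB2 R (A2 (fun i => (c i).1) (n+1)) (B2 (fun i => (c i).1) (n+1))
                 (A2 (fun i => (c i).2) (n+1)) (B2 (fun i => (c i).2) (n+1)) e *
        ∏ k : Fin (n+1),
          subAB2 R (A2 (fun i => (c i).1) k) (B2 (fun i => (c i).1) k)
                   (A2 (fun i => (c i).2) k) (B2 (fun i => (c i).2) k)
            (f (Fin.cons (α := fun _ => {p // p ∈ Jset}) p w k)))
      (extPair (n+1) fun k => ((Fin.cons (α := fun _ => {p // p ∈ Jset}) p w k) : Option ℕ × Option ℕ))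
    = f ↑p * sig2 R ↑p
      ((fun c : ℕ → Option ℕ × Option ℕ =>
        subAB2 R (A2 (fun i => (c i).1) n) (B2 (fun i => (c i).1) n)
                 (A2 (fun i => (c i).2) n) (B2 (fun i => (c i).2) n) e *
        ∏ k : Fin n,
          subAB2 R (A2 (fun i => (c i).1) k) (B2 (fun i => (c i).1) k)
                   (A2 (fun i => (c i).2) k) (B2 (fun i => (c i).2) k)
            (f (w k)))
      (extPair n fun k => ((w k : {p // p ∈ Jset}) : Option ℕ × Option ℕ)))
  simp only [extPair_cons]
  set c := extPair n fun k => ((w k : {p // p ∈ Jset}) : Option ℕ × Option ℕ) with hc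
  have h1 : (fun i => ((consN (↑p : Option ℕ × Option ℕ) c) i).1)
      = consN (↑p : Option ℕ × Option ℕ).1 (fun i => (c i).1) := by
    funext i; cases i <;> rfl
  have h2 : (fun i => ((consN (↑p : Option ℕ × Option ℕ) c) i).2)
      = consN (↑p : Option ℕ × Option ℕ).2 (fun i => (c i).2) := by
    funext i; cases i <;> rfl
  simp only [h1, h2, Fin.prod_univ_succ, Fin.val_zero, Fin.val_succ, A2_zero, B2_zero,
    subAB2_id, Fin.cons_zero, Fin.cons_succ, A2_cons, B2_cons, ← sig2_subAB2]
  rw [map_mul, map_prod]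
  ring

lemma coeff_rhs_zero (Jset : Finset (Option ℕ × Option ℕ)) (e : RS R)
    (f : Option ℕ × Option ℕ → RS R) (G : PowerSeries (RS R)) :
    PowerSeries.coeff (R := RS R) 0
      (PowerSeries.C e
        + ∑ p ∈ Jset, PowerSeries.X * PowerSeries.C (f p)
            * PowerSeries.map (sig2 R p) G) = e := by
  simp [mul_assoc, PowerSeries.coeff_zero_eq_constantCoeff, map_sum]

lemma coeff_rhs_succ (Jset : Finset (Option ℕ × Option ℕ)) (e : RS R)
    (f : Option ℕ × Option ℕ → RS R) (G : PowerSeries (RS R)) (n : ℕ) :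
    PowerSeries.coeff (R := RS R) (n+1)
      (PowerSeries.C e
        + ∑ p ∈ Jset, PowerSeries.X * PowerSeries.C (f p)
            * PowerSeries.map (sig2 R p) G)
      = ∑ p ∈ Jset, f p * sig2 R p (PowerSeries.coeff (R := RS R) n G) := by
  rw [map_add, map_sum]
  simp only [mul_assoc, PowerSeries.coeff_succ_X_mul, PowerSeries.coeff_C_mul,
    PowerSeries.coeff_map, PowerSeries.coeff_C, Nat.succ_ne_zero, if_false]
  simp

/-- The `m = 2` case of the paper's main theorem: the functional equation
`F(r,s) = e(r,s) + Σ_{𝐣∈𝒥} x·f_𝐣(r,s)·F(σ_{j₁}(r), σ_{j₂}(s))` has a unique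
formal power series solution, given by the explicit sum `Fsol2`. -/
theorem main_theorem_two_variables (Jset : Finset (Option ℕ × Option ℕ))
    (e : RS R) (f : Option ℕ × Option ℕ → RS R) :
    (Fsol2 R Jset e f
        = PowerSeries.C e
          + ∑ p ∈ Jset, PowerSeries.X * PowerSeries.C (f p)
              * PowerSeries.map (sig2 R p) (Fsol2 R Jset e f))
    ∧ ∀ G : PowerSeries (RS R),
        (G = PowerSeries.C e
          + ∑ p ∈ Jset, PowerSeries.X * PowerSeries.C (f p)
              * PowerSeries.map (sig2 R p) G)
        → G = Fsol2 R Jset e f := by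
  constructor
  · apply PowerSeries.ext
    intro n
    cases n with
    | zero => rw [coeff_Fsol2_zero, coeff_rhs_zero]
    | succ n => rw [coeff_Fsol2_succ, coeff_rhs_succ]
  · intro G hG
    apply PowerSeries.ext
    intro n
    induction n with
    | zero =>
        have h1 := congrArg (PowerSeries.coeff (R := RS R) 0) hG
        rw [coeff_rhs_zero] at h1
        rw [h1, coeff_Fsol2_zero]
    | succ n ih =>
        have h1 := congrArg (PowerSeries.coeff (R := RS R) (n+1)) hG
        rw [coeff_rhs_succ] at h1
        rw [h1, coeff_Fsol2_succ]
        exact Finset.sum_congr rfl fun p _ => by rw [ih]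

end
end

section
/- In the explicit solution of the functional equation F(s) = x·e(s) + x·f_{-1}(s)·F(1) + x·f_1(s)·F(qs), the coefficient of x^{n+1} in F(s) equals Σ_{J∈{-1,1}^n} e(q^{a_{n+1}} s^{b_{n+1}})·∏_{k=1}^n f_{j_k}(q^{a_k} s^{b_k}) evaluated with the x-grading accounted for, provided e, f_{-1}, f_1 do not involve x. In particular, each coefficient of F is a finite sum of 2^n explicitly computable terms. -/
noncomputable section

variable (R : Type*) [CommRing R]

/-- Substitution `s ↦ q^a s^b` on the coefficient ring (with `s^0 = 1`). -/
def subAB (a b : ℕ) : QS R →+* QS R :=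
  (Polynomial.aeval ((Polynomial.C (PowerSeries.X ^ a) : QS R) * Polynomial.X ^ b)).toRingHom

/-- `a_k`: the length of the maximal run of 1s (`true`s) among the first `k`
entries of `J` ending at entry `k-1`. -/
def runA (J : ℕ → Bool) (k : ℕ) : ℕ :=
  ((Finset.range k).filter fun i => ∀ j ∈ Finset.Ico i k, J j = true).card

/-- `b_k`: equals `1` if the first `k` entries of `J` are all 1, else `0`. -/
def runB (J : ℕ → Bool) (k : ℕ) : ℕ :=
  if ∀ i < k, J i = true then 1 else 0

/-- Extend a word of length `n` to `ℕ → Bool` by `false`. -/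
def extWord (n : ℕ) (J : Fin n → Bool) : ℕ → Bool :=
  fun i => if h : i < n then J ⟨i, h⟩ else false

lemma subAB_zero_one (p : QS R) : subAB R 0 1 p = p := by
  simp [subAB]

lemma subAB_comp (c d a b : ℕ) (p : QS R) :
    subAB R c d (subAB R a b p) = subAB R (a + c * b) (d * b) p := by
  show (Polynomial.aeval _ : QS R →ₐ[PowerSeries R] QS R)
      ((Polynomial.aeval _ : QS R →ₐ[PowerSeries R] QS R) p) = _
  rw [← Polynomial.aeval_algHom_apply]
  have harg : (Polynomial.aeval ((Polynomial.C (PowerSeries.X ^ c) : QS R) * Polynomial.X ^ d))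
      ((Polynomial.C (PowerSeries.X ^ a) : QS R) * Polynomial.X ^ b)
      = (Polynomial.C (PowerSeries.X ^ (a + c * b)) : QS R) * Polynomial.X ^ (d * b) := by
    simp only [map_mul, map_pow, Polynomial.aeval_X, Polynomial.aeval_C, Polynomial.algebraMap_eq]
    ring
  rw [harg]
  rfl

def shf (b : Bool) (J : ℕ → Bool) : ℕ → Bool
  | 0 => b
  | i + 1 => J i

lemma extWord_cons (n : ℕ) (b : Bool) (J : Fin n → Bool) :
    extWord (n + 1) (Fin.cons b J) = shf b (extWord n J) := by
  funext i
  cases i with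
  | zero => simp [extWord, shf]
  | succ m =>
    simp only [extWord, shf]
    by_cases h : m < n
    · rw [dif_pos (Nat.succ_lt_succ h), dif_pos h]
      exact Fin.cons_succ (α := fun _ => Bool) b J ⟨m, h⟩
    · rw [dif_neg (by omega), dif_neg h]

lemma runA_zero (J : ℕ → Bool) : runA J 0 = 0 := by simp [runA]

lemma runB_zero (J : ℕ → Bool) : runB J 0 = 1 := by simp [runB]

lemma runB_shf (b : Bool) (J : ℕ → Bool) (k : ℕ) :
    runB (shf b J) (k + 1) = if b then runB J k else 0 := by
  unfold runB
  cases b with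
  | false =>
    rw [if_neg, if_neg (by simp)]
    intro h
    have := h 0 (Nat.succ_pos k); simp [shf] at this
  | true =>
    rw [if_pos rfl]
    by_cases h : ∀ i < k, J i = true
    · rw [if_pos h, if_pos]
      intro i hi
      cases i with
      | zero => rfl
      | succ m => exact h m (by omega)
    · rw [if_neg h, if_neg]
      intro hh
      exact h fun i hi => hh (i + 1) (by omega)

lemma runA_shf (b : Bool) (J : ℕ → Bool) (k : ℕ) :
    runA (shf b J) (k + 1) = runA J k + (if b then runB J k else 0) := by
  unfold runA
  rw [Finset.card_filter, Finset.card_filter, Finset.sum_range_succ']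
  congr 1
  · refine Finset.sum_congr rfl fun i _ => ?_
    refine if_congr ?_ rfl rfl
    constructor
    · intro h j hj
      simp only [Finset.mem_Ico] at hj
      exact h (j + 1) (by simp only [Finset.mem_Ico]; omega)
    · intro h j hj
      simp only [Finset.mem_Ico] at hj
      cases j with
      | zero => omega
      | succ m => exact h m (by simp only [Finset.mem_Ico]; omega)
  · unfold runB
    cases b with
    | false =>
      rw [if_neg, if_neg (by simp)]
      intro h
      have := h 0 (by simp only [Finset.mem_Ico]; omega); simp [shf] at this
    | true =>
      rw [if_pos rfl]
      by_cases h : ∀ i < k, J i = true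
      · rw [if_pos h, if_pos]
        intro j hj
        cases j with
        | zero => rfl
        | succ m =>
          simp only [Finset.mem_Ico] at hj
          exact h m (by omega)
      · rw [if_neg h, if_neg]
        intro hh
        exact h fun i hi => hh (i + 1) (by simp only [Finset.mem_Ico]; omega)

lemma coeff_zero_F (e fneg fpos : QS R) (F : PowerSeries (QS R))
    (hF : F = PowerSeries.X * PowerSeries.C e
        + PowerSeries.X * PowerSeries.C fneg
            * PowerSeries.map (subAB R 0 0) F
        + PowerSeries.X * PowerSeries.C fpos
            * PowerSeries.map (subAB R 1 1) F) :
    PowerSeries.coeff 0 F = 0 := by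
  conv_lhs => rw [hF]
  simp [PowerSeries.coeff_zero_eq_constantCoeff, map_add, map_mul]

lemma coeff_rec (e fneg fpos : QS R) (F : PowerSeries (QS R))
    (hF : F = PowerSeries.X * PowerSeries.C e
        + PowerSeries.X * PowerSeries.C fneg
            * PowerSeries.map (subAB R 0 0) F
        + PowerSeries.X * PowerSeries.C fpos
            * PowerSeries.map (subAB R 1 1) F) (n : ℕ) :
    PowerSeries.coeff (n + 1) F
      = (if n = 0 then e else 0)
        + fneg * subAB R 0 0 (PowerSeries.coeff n F)
        + fpos * subAB R 1 1 (PowerSeries.coeff n F) := by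
  conv_lhs => rw [hF]
  rw [map_add, map_add, mul_assoc, mul_assoc, PowerSeries.coeff_succ_X_mul,
    PowerSeries.coeff_succ_X_mul, PowerSeries.coeff_succ_X_mul,
    PowerSeries.coeff_C, PowerSeries.coeff_C_mul, PowerSeries.coeff_C_mul,
    PowerSeries.coeff_map, PowerSeries.coeff_map]

/-- If `e, f_{-1}, f_1` do not involve `x` and `F` is a solution of
`F(s) = x·e(s) + x·f_{-1}(s)·F(1) + x·f_1(s)·F(qs)`, then the coefficient of
`x^{n+1}` in `F` is the finite sum of `2^n` explicit terms
`Σ_{J∈{-1,1}^n} e(q^{a_{n+1}} s^{b_{n+1}}) ∏_{k=1}^n f_{j_k}(q^{a_k} s^{b_k})`. -/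
theorem coeff_of_solution (e fneg fpos : QS R) (F : PowerSeries (QS R))
    (hF : F = PowerSeries.X * PowerSeries.C e
        + PowerSeries.X * PowerSeries.C fneg
            * PowerSeries.map (subAB R 0 0) F
        + PowerSeries.X * PowerSeries.C fpos
            * PowerSeries.map (subAB R 1 1) F) (n : ℕ) :
    PowerSeries.coeff (n + 1) F
      = ∑ J : Fin n → Bool,
          subAB R (runA (extWord n J) n) (runB (extWord n J) n) e *
            ∏ k : Fin n,
              subAB R (runA (extWord n J) k) (runB (extWord n J) k)
                (if J k then fpos else fneg) := by
  induction n with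
  | zero =>
    rw [coeff_rec R e fneg fpos F hF 0, if_pos rfl, coeff_zero_F R e fneg fpos F hF]
    rw [Fintype.sum_unique]
    simp [runA_zero, runB_zero, subAB_zero_one]
  | succ n ih =>
    rw [coeff_rec R e fneg fpos F hF (n + 1), if_neg (Nat.succ_ne_zero n), ih, zero_add]
    rw [← Equiv.sum_comp (Fin.consEquiv fun _ : Fin (n + 1) => Bool), Fintype.sum_prod_type,
      Fintype.sum_bool]
    have hc : ∀ (b : Bool) (J : Fin n → Bool),
        (Fin.consEquiv fun _ : Fin (n + 1) => Bool) (b, J) = Fin.cons b J := fun _ _ => rfl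
    simp only [hc]
    rw [add_comm (fneg * _)]
    congr 1
    · rw [map_sum, Finset.mul_sum]
      refine Finset.sum_congr rfl fun J _ => ?_
      rw [map_mul, map_prod, Fin.prod_univ_succ, extWord_cons]
      simp only [Fin.cons_zero, Fin.cons_succ, Fin.val_zero, Fin.val_succ,
        runA_shf, runB_shf, runA_zero, runB_zero, subAB_comp, subAB_zero_one,
        if_true, zero_mul, mul_zero, one_mul, mul_one, add_zero, zero_add]
      ring
    · rw [map_sum, Finset.mul_sum]
      refine Finset.sum_congr rfl fun J _ => ?_
      rw [map_mul, map_prod, Fin.prod_univ_succ, extWord_cons]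
      simp only [Fin.cons_zero, Fin.cons_succ, Fin.val_zero, Fin.val_succ,
        runA_shf, runB_shf, runA_zero, runB_zero, subAB_comp, subAB_zero_one,
        Bool.false_eq_true, if_false, zero_mul, mul_zero, one_mul, mul_one, add_zero, zero_add]
      ring

end
end
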